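/- arXiv:1805.05724 — 8 statements merged into one kernel-verified Lean document; each statement's English description precedes it below -/
import Mathlib

section
/- A positive real square matrix M satisfying M² = cM for a positive real c has rank 1. -/
/-- A positive real square matrix `M` satisfying `M² = c • M` for a positive real `c`
has rank 1. -/
theorem stmt1 {r : ℕ} (hr : 0 < r) (M : Matrix (Fin r) (Fin r) ℝ)
    (hM : ∀ i j, 0 < M i j) (c : ℝ) (hc : 0 < c) (h : M * M = c • M) :
    M.rank = 1 := by
  have i0 : Fin r := ⟨0, hr⟩
  -- each column of M is an eigenvector with eigenvalue c
  have hcol : ∀ j, M.mulVec (fun i => M i j) = c • (fun i => M i j) := by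
    intro j
    funext i
    have := congrFun (congrFun h i) j
    simpa [Matrix.mul_apply, Matrix.mulVec, dotProduct] using this
  -- key Perron-type lemma: a nonneg eigenvector with a zero entry is zero
  have key : ∀ w : Fin r → ℝ, (∀ i, 0 ≤ w i) → M.mulVec w = c • w →
      ∀ i₁, w i₁ = 0 → ∀ k, w k = 0 := by
    intro w hw heig i₁ h0 k
    by_contra hk
    have hkpos : 0 < w k := lt_of_le_of_ne (hw k) (Ne.symm hk)
    have hpos : 0 < M.mulVec w i₁ := by
      unfold Matrix.mulVec dotProduct
      apply Finset.sum_pos' (fun i _ => mul_nonneg (hM i₁ i).le (hw i))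
      exact ⟨k, Finset.mem_univ k, mul_pos (hM i₁ k) hkpos⟩
    rw [heig] at hpos
    simp only [Pi.smul_apply, smul_eq_mul, h0, mul_zero] at hpos
    exact lt_irrefl 0 hpos
  -- each column is a positive multiple of column i0
  have hs : ∀ j, ∃ sj : ℝ, 0 < sj ∧ ∀ i, M i j = sj * M i i0 := by
    intro j
    obtain ⟨i₁, -, hi₁⟩ := Finset.exists_min_image Finset.univ
      (fun i => M i j / M i i0) ⟨i0, Finset.mem_univ i0⟩
    set sj := M i₁ j / M i₁ i0 with hsj
    refine ⟨sj, div_pos (hM i₁ j) (hM i₁ i0), ?_⟩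
    set w : Fin r → ℝ := (fun i => M i j) - sj • (fun i => M i i0) with hwdef
    have hw : ∀ i, 0 ≤ w i := by
      intro i
      have h1 : sj ≤ M i j / M i i0 := hi₁ i (Finset.mem_univ i)
      have h2 : sj * M i i0 ≤ (M i j / M i i0) * M i i0 :=
        mul_le_mul_of_nonneg_right h1 (hM i i0).le
      rw [div_mul_cancel₀ _ (hM i i0).ne'] at h2
      simpa [hwdef, sub_nonneg] using h2
    have heig : M.mulVec w = c • w := by
      rw [hwdef, Matrix.mulVec_sub, Matrix.mulVec_smul, hcol, hcol, smul_sub,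
        smul_comm]
    have h0 : w i₁ = 0 := by
      simp [hwdef, hsj, div_mul_cancel₀ _ (hM i₁ i0).ne']
    intro i
    have := key w hw heig i₁ h0 i
    have : M i j - sj * M i i0 = 0 := by simpa [hwdef] using this
    linarith
  choose s hs1 hs2 using hs
  -- M factors as column times row
  have hfac : M = Matrix.replicateCol Unit (fun i => M i i0) * Matrix.replicateRow Unit s := by
    ext i j
    simp [Matrix.mul_apply, Matrix.replicateCol, Matrix.replicateRow, mul_comm, hs2 j i]
  have hle : M.rank ≤ 1 := by
    rw [hfac]
    refine le_trans (Matrix.rank_mul_le_left _ _) ?_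
    simpa using Matrix.rank_le_card_width (Matrix.replicateCol Unit (fun i => M i i0))
  have hne : M.rank ≠ 0 := by
    intro h0
    have hrange : LinearMap.range M.mulVecLin = ⊥ := by
      rw [Matrix.rank] at h0
      exact Submodule.finrank_eq_zero.mp h0
    have : M.mulVec (Pi.single i0 1) = 0 := by
      have : M.mulVec (Pi.single i0 1) ∈ LinearMap.range M.mulVecLin :=
        ⟨Pi.single i0 1, rfl⟩
      rw [hrange] at this
      simpa using this
    have h1 := congrFun this i0
    have h2 : M.mulVec (Pi.single i0 1) i0 = M i0 i0 := by
      simp [Matrix.mulVec, dotProduct, Pi.single_apply]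
    rw [h2] at h1
    exact (hM i0 i0).ne' h1
  omega
end

section
/- A positive real square matrix M satisfying M² = cM has trace equal to c. -/
/-- A positive real square matrix `M` satisfying `M² = c • M` for a positive real `c`
has trace equal to `c`. -/
theorem stmt2 {r : ℕ} (hr : 0 < r) (M : Matrix (Fin r) (Fin r) ℝ)
    (hM : ∀ i j, 0 < M i j) (c : ℝ) (hc : 0 < c) (h : M * M = c • M) :
    Matrix.trace M = c := by
  set z : Fin r := ⟨0, hr⟩ with hz
  have hmul : ∀ i j, (∑ k, M i k * M k j) = c * M i j := by
    intro i j
    have := congrFun (congrFun h i) j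
    simpa [Matrix.mul_apply, Matrix.smul_apply] using this
  -- key lemma: columns are proportional
  have key : ∀ j i, M i j = (M z j / M z z) * M i z := by
    intro j
    obtain ⟨i0, _, hi0⟩ := Finset.exists_min_image Finset.univ
      (fun i => M i j / M i z) ⟨z, Finset.mem_univ z⟩
    set t : ℝ := M i0 j / M i0 z with ht
    have hwnn : ∀ i, 0 ≤ M i j - t * M i z := by
      intro i
      have h1 := hi0 i (Finset.mem_univ i)
      have h2 : t * M i z ≤ M i j := by
        rw [ht] at h1
        rw [ht, div_mul_eq_mul_div, div_le_iff₀ (hM i0 z)]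
        have := (div_le_div_iff₀ (hM i0 z) (hM i z)).mp h1
        linarith
      linarith
    have hw0 : M i0 j - t * M i0 z = 0 := by
      rw [ht, div_mul_eq_mul_div, mul_div_assoc, div_self (ne_of_gt (hM i0 z))]
      ring
    have hsum : (∑ l, M i0 l * (M l j - t * M l z)) = 0 := by
      have : (∑ l, M i0 l * (M l j - t * M l z))
          = (∑ l, M i0 l * M l j) - t * (∑ l, M i0 l * M l z) := by
        rw [Finset.mul_sum]
        rw [← Finset.sum_sub_distrib]
        congr 1; ext l; ring
      rw [this, hmul, hmul]
      have := hw0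
      nlinarith [hw0]
    have hall : ∀ l, M i0 l * (M l j - t * M l z) = 0 := by
      intro l
      have := (Finset.sum_eq_zero_iff_of_nonneg
        (fun l _ => mul_nonneg (le_of_lt (hM i0 l)) (hwnn l))).mp hsum
      exact this l (Finset.mem_univ l)
    have hcol : ∀ l, M l j = t * M l z := by
      intro l
      have := hall l
      have hne := ne_of_gt (hM i0 l)
      have := mul_eq_zero.mp this
      rcases this with h' | h'
      · exact absurd h' hne
      · linarith
    have htz : t = M z j / M z z := by
      rw [hcol z, mul_div_assoc, div_self (ne_of_gt (hM z z)), mul_one]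
    intro i
    rw [hcol i, htz]
  have hMzz := ne_of_gt (hM z z)
  have htrace : Matrix.trace M = (∑ i, M z i * M i z) / M z z := by
    rw [Matrix.trace, Finset.sum_div]
    congr 1; ext i
    rw [Matrix.diag_apply]
    rw [key i i]
    field_simp
  rw [htrace, hmul z z, mul_div_assoc, div_self hMzz, mul_one]
end

section
/- Up to simultaneous permutation of rows and columns, the only 2×2 matrices with strictly positive integer entries satisfying M² = 3M are (2 1; 2 1) and (2 2; 1 1). -/
/-- Up to simultaneous permutation of rows and columns, the only `2 × 2` matrices with
strictly positive integer entries satisfying `M² = 3M` are `(2 1; 2 1)` and `(2 2; 1 1)`. -/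
theorem stmt4 (M : Matrix (Fin 2) (Fin 2) ℕ) (hM : ∀ i j, 1 ≤ M i j)
    (h : M * M = 3 • M) :
    ∃ σ : Equiv.Perm (Fin 2),
      M.submatrix σ σ = !![2, 1; 2, 1] ∨ M.submatrix σ σ = !![2, 2; 1, 1] := by
  have h00 := congrFun (congrFun h 0) 0
  have h01 := congrFun (congrFun h 0) 1
  have h10 := congrFun (congrFun h 1) 0
  have h11 := congrFun (congrFun h 1) 1
  simp only [Matrix.mul_apply, Fin.sum_univ_two, Matrix.smul_apply, smul_eq_mul]
    at h00 h01 h10 h11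
  have hpa := hM 0 0
  have hpb := hM 0 1
  have hpc := hM 1 0
  have hpd := hM 1 1
  have key : (M 0 0 = 1 ∧ M 0 1 = 1 ∧ M 1 0 = 2 ∧ M 1 1 = 2) ∨
      (M 0 0 = 1 ∧ M 0 1 = 2 ∧ M 1 0 = 1 ∧ M 1 1 = 2) ∨
      (M 0 0 = 2 ∧ M 0 1 = 1 ∧ M 1 0 = 2 ∧ M 1 1 = 1) ∨
      (M 0 0 = 2 ∧ M 0 1 = 2 ∧ M 1 0 = 1 ∧ M 1 1 = 1) := by
    obtain ⟨a, b, c, d, ha, hb, hc, hd⟩ :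
        ∃ a b c d, M 0 0 = a ∧ M 0 1 = b ∧ M 1 0 = c ∧ M 1 1 = d :=
      ⟨_, _, _, _, rfl, rfl, rfl, rfl⟩
    simp only [ha, hb, hc, hd] at h00 h01 h10 h11 hpa hpb hpc hpd ⊢
    -- a + d = 3 from column equation: a*b + b*d = 3*b
    have had : a + d = 3 := by nlinarith
    have hbc : b * c = 2 := by nlinarith
    have hb2 : b ≤ 2 := Nat.le_of_dvd (by norm_num) ⟨c, hbc.symm⟩
    have ha2 : a ≤ 2 := by omega
    interval_cases a <;> interval_cases b <;> omega
  rcases key with ⟨e1, e2, e3, e4⟩ | ⟨e1, e2, e3, e4⟩ | ⟨e1, e2, e3, e4⟩ | ⟨e1, e2, e3, e4⟩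
  · exact ⟨Equiv.swap 0 1, Or.inr (by
      ext i j
      fin_cases i <;> fin_cases j <;>
        simp [Matrix.submatrix_apply, Equiv.swap_apply_def, e1, e2, e3, e4])⟩
  · exact ⟨Equiv.swap 0 1, Or.inl (by
      ext i j
      fin_cases i <;> fin_cases j <;>
        simp [Matrix.submatrix_apply, Equiv.swap_apply_def, e1, e2, e3, e4])⟩
  · exact ⟨1, Or.inl (by
      ext i j
      fin_cases i <;> fin_cases j <;> simp [Matrix.submatrix_apply, e1, e2, e3, e4])⟩
  · exact ⟨1, Or.inr (by
      ext i j
      fin_cases i <;> fin_cases j <;> simp [Matrix.submatrix_apply, e1, e2, e3, e4])⟩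
end

section
/- The only 3×3 matrix with strictly positive integer entries satisfying M² = 3M is the matrix all of whose entries are 1. -/
lemma key5 (a e b p : ℕ) (ha : 1 ≤ a) (he : 1 ≤ e) (hb : 1 ≤ b) (hp : 1 ≤ p)
    (h : a * b + b * e + p = 3 * b) : a = 1 ∧ e = 1 := by
  have h3 : a + e < 3 := by nlinarith
  omega

/-- The only `3 × 3` matrix with strictly positive integer entries satisfying `M² = 3M`
is the matrix all of whose entries are `1`. -/
theorem stmt5 (M : Matrix (Fin 3) (Fin 3) ℕ) (hM : ∀ i j, 1 ≤ M i j)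
    (h : M * M = 3 • M) :
    ∀ i j, M i j = 1 := by
  have e : ∀ i j : Fin 3, M i 0 * M 0 j + M i 1 * M 1 j + M i 2 * M 2 j = 3 * M i j := by
    intro i j
    have := congrFun (congrFun h i) j
    simpa [Matrix.mul_apply, Fin.sum_univ_three] using this
  have hp : ∀ i j : Fin 3, 1 ≤ M i j * M j i := fun i j =>
    Nat.one_le_iff_ne_zero.mpr (Nat.mul_ne_zero (by have := hM i j; omega) (by have := hM j i; omega))
  -- diagonal entries are 1
  have d0 : M 0 0 = 1 ∧ M 1 1 = 1 := by
    have h01 := e 0 1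
    exact key5 _ _ _ _ (hM 0 0) (hM 1 1) (hM 0 1)
      (Nat.one_le_iff_ne_zero.mpr (Nat.mul_ne_zero (Nat.one_le_iff_ne_zero.mp (hM 0 2)) (Nat.one_le_iff_ne_zero.mp (hM 2 1)))) h01
  have d2 : M 2 2 = 1 := by
    have h02 := e 0 2
    exact (key5 _ _ _ _ (hM 0 0) (hM 2 2) (hM 0 2)
      (Nat.one_le_iff_ne_zero.mpr (Nat.mul_ne_zero (Nat.one_le_iff_ne_zero.mp (hM 0 1)) (Nat.one_le_iff_ne_zero.mp (hM 1 2)))) (by linarith [h02])).2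
  obtain ⟨da, db⟩ := d0
  -- diagonal equations force cross products = 1
  have h00 := e 0 0
  have h11 := e 1 1
  rw [da] at h00
  rw [db] at h11
  have p1 : M 0 1 * M 1 0 = 1 ∧ M 0 2 * M 2 0 = 1 := by
    have := hp 0 1; have := hp 0 2; omega
  have p2 : M 1 2 * M 2 1 = 1 := by
    have := hp 1 0; have := hp 1 2; omega
  have q1a := Nat.eq_one_of_mul_eq_one_right p1.1
  have q1b := Nat.eq_one_of_mul_eq_one_left p1.1
  have q2a := Nat.eq_one_of_mul_eq_one_right p1.2
  have q2b := Nat.eq_one_of_mul_eq_one_left p1.2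
  have q3a := Nat.eq_one_of_mul_eq_one_right p2
  have q3b := Nat.eq_one_of_mul_eq_one_left p2
  intro i j
  fin_cases i <;> fin_cases j <;>
    simp_all
end

section
/- There is no r×r matrix with strictly positive integer entries satisfying M² = 3M when r ≥ 4. -/
/-- There is no `r × r` matrix with strictly positive integer entries satisfying `M² = 3M`
when `r ≥ 4`. -/
theorem stmt6 {r : ℕ} (hr : 4 ≤ r) (M : Matrix (Fin r) (Fin r) ℕ)
    (hM : ∀ i j, 1 ≤ M i j) (h : M * M = 3 • M) :
    False := by
  set i : Fin r := ⟨0, by omega⟩ with hi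
  have hdiag : (M * M) i i = 3 * M i i := by
    rw [h]; simp
  rw [Matrix.mul_apply] at hdiag
  have hsplit : M i i * M i i + ∑ k ∈ Finset.univ.erase i, M i k * M k i
      = ∑ k, M i k * M k i := by
    exact Finset.add_sum_erase _ (fun k => M i k * M k i) (Finset.mem_univ i)
  have hrest : (r - 1) * 1 ≤ ∑ k ∈ Finset.univ.erase i, M i k * M k i := by
    have hcard : (Finset.univ.erase i).card = r - 1 := by
      rw [Finset.card_erase_of_mem (Finset.mem_univ i)]
      simp
    rw [← hcard]
    simpa using Finset.card_nsmul_le_sum (Finset.univ.erase i) (fun k => M i k * M k i) 1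
      (fun k _ => Nat.mul_le_mul (hM i k) (hM k i))
  have h1 : 1 ≤ M i i := hM i i
  have : M i i * M i i + (r - 1) * 1 ≤ 3 * M i i := by
    rw [← hdiag, ← hsplit]
    omega
  have h4 : M i i * M i i + 3 ≤ 3 * M i i := by
    have h3 : 3 ≤ r - 1 := by omega
    linarith
  have h5 : (M i i : ℤ) * M i i + 3 ≤ 3 * M i i := by exact_mod_cast h4
  nlinarith [sq_nonneg (2 * (M i i : ℤ) - 3)]
end

section
/- If M is an r×r matrix with strictly positive integer entries and M² = (n+2)M, then r ≤ n+2, and M = v wᵀ for column vectors v, w with positive integer entries satisfying wᵀv = n+2. -/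
open Matrix

/-- If `M` is an `r × r` matrix with strictly positive integer entries and `M² = (n+2)M`,
then `r ≤ n + 2`, and `M = v wᵀ` for column vectors `v, w` with positive integer entries
satisfying `wᵀ v = n + 2`. -/
theorem stmt7 {n r : ℕ} (hn : 1 ≤ n) (hr : 0 < r)
    (M : Matrix (Fin r) (Fin r) ℕ) (hM : ∀ i j, 1 ≤ M i j)
    (h : M * M = (n + 2) • M) :
    r ≤ n + 2 ∧ ∃ v w : Fin r → ℕ, (∀ i, 0 < v i) ∧ (∀ i, 0 < w i) ∧
      M = Matrix.vecMulVec v w ∧ w ⬝ᵥ v = n + 2 := by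
  have hpos : ∀ i j, 0 < M i j := hM
  have heq : ∀ a b : Fin r, ∑ s, M a s * M s b = (n + 2) * M a b := by
    intro a b
    have := congrFun (congrFun h a) b
    simpa [Matrix.mul_apply, Matrix.smul_apply] using this
  -- key: all 2x2 minors vanish
  have key : ∀ i k j l, M i j * M k l = M i l * M k j := by
    intro i k
    obtain ⟨j0, -, hj0⟩ := Finset.exists_min_image Finset.univ
      (fun j => (M i j : ℚ) / (M k j)) ⟨⟨0, hr⟩, Finset.mem_univ _⟩
    have hmin : ∀ j, M i j0 * M k j ≤ M i j * M k j0 := by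
      intro j
      have h1 := hj0 j (Finset.mem_univ j)
      have hk0 : (0:ℚ) < M k j0 := by exact_mod_cast hpos k j0
      have hkj : (0:ℚ) < M k j := by exact_mod_cast hpos k j
      rw [div_le_div_iff₀ hk0 hkj] at h1
      exact_mod_cast h1
    set z : Fin r → ℤ := fun j => (M i j : ℤ) * M k j0 - M i j0 * M k j with hz
    have hznn : ∀ j, 0 ≤ z j := by
      intro j
      have := hmin j
      simp only [hz, sub_nonneg]
      exact_mod_cast this
    have heig : ∑ s, z s * M s j0 = 0 := by
      have h1 : ∑ s, (M i s : ℤ) * M s j0 = (n + 2) * M i j0 := by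
        exact_mod_cast congrArg (Nat.cast : ℕ → ℤ) (heq i j0)
      have h2 : ∑ s, (M k s : ℤ) * M s j0 = (n + 2) * M k j0 := by
        exact_mod_cast congrArg (Nat.cast : ℕ → ℤ) (heq k j0)
      have : ∑ s, z s * M s j0
          = (M k j0 : ℤ) * ∑ s, (M i s : ℤ) * M s j0
            - (M i j0 : ℤ) * ∑ s, (M k s : ℤ) * M s j0 := by
        rw [Finset.mul_sum, Finset.mul_sum, ← Finset.sum_sub_distrib]
        apply Finset.sum_congr rfl
        intro s _
        simp only [hz]; ring
      rw [this, h1, h2]; ring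
    have hzero : ∀ s, z s = 0 := by
      have hall := (Finset.sum_eq_zero_iff_of_nonneg (fun s _ => by
        have : (0:ℤ) ≤ M s j0 := by positivity
        exact mul_nonneg (hznn s) this)).1 heig
      intro s
      have := hall s (Finset.mem_univ s)
      have hm : (0:ℤ) < M s j0 := by exact_mod_cast hpos s j0
      exact (mul_eq_zero.1 this).resolve_right (by positivity)
    have hcross : ∀ j, M i j * M k j0 = M i j0 * M k j := by
      intro j
      have := hzero j
      have : (M i j : ℤ) * M k j0 = M i j0 * M k j := by
        simpa [hz, sub_eq_zero] using this
      exact_mod_cast this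
    intro j l
    have hpos0 : 0 < M i j0 * M k j0 := Nat.mul_pos (hpos i j0) (hpos k j0)
    apply Nat.eq_of_mul_eq_mul_right hpos0
    have e1 := hcross j
    have e2 := hcross l
    zify at e1 e2 ⊢
    linear_combination ((M k l : ℤ) * (M i j0 : ℤ)) * e1 - ((M k j : ℤ) * (M i j0 : ℤ)) * e2
  -- construct v, w
  set i0 : Fin r := ⟨0, hr⟩ with hi0
  set g : ℕ := Finset.univ.gcd (fun j => M i0 j) with hg
  set w : Fin r → ℕ := fun j => M i0 j / g with hw
  have hgdvd : ∀ j, g ∣ M i0 j := fun j => Finset.gcd_dvd (Finset.mem_univ j)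
  have hgpos : 0 < g := Nat.pos_of_dvd_of_pos (hgdvd i0) (hpos i0 i0)
  have hwpos : ∀ j, 0 < w j := by
    intro j
    exact Nat.div_pos (Nat.le_of_dvd (hpos i0 j) (hgdvd j)) hgpos
  have hwg : ∀ j, g * w j = M i0 j := fun j => Nat.mul_div_cancel' (hgdvd j)
  have hwgcd : Finset.univ.gcd w = 1 := by
    have := Finset.gcd_div_eq_one (s := Finset.univ) (f := fun j => M i0 j)
      (Finset.mem_univ i0) (hpos i0 i0).ne'
    simpa [hw, hg] using this
  -- proportionality: M i j * w l = M i l * w j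
  have hprop : ∀ i j l, M i j * w l = M i l * w j := by
    intro i j l
    have hk := key i i0 j l
    apply Nat.eq_of_mul_eq_mul_left hgpos
    calc g * (M i j * w l) = M i j * (g * w l) := by ring
      _ = M i j * M i0 l := by rw [hwg]
      _ = M i l * M i0 j := hk
      _ = M i l * (g * w j) := by rw [hwg]
      _ = g * (M i l * w j) := by ring
  have hdvd : ∀ i j, w j ∣ M i j := by
    intro i j
    have h1 : w j ∣ Finset.univ.gcd (fun l => M i j * w l) :=
      Finset.dvd_gcd (fun l _ => ⟨M i l, by rw [hprop i j l]; ring⟩)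
    rw [Finset.gcd_mul_left, hwgcd] at h1
    simpa using h1
  set v : Fin r → ℕ := fun i => M i i0 / w i0 with hv
  have hvw : ∀ i j, M i j = v i * w j := by
    intro i j
    obtain ⟨a, ha⟩ := hdvd i j
    obtain ⟨b, hb⟩ := hdvd i i0
    have hvi : v i = b := by
      simp [hv, hb, Nat.mul_div_cancel_left _ (hwpos i0)]
    have hab : a = b := by
      have h1 := hprop i j i0
      rw [ha, hb] at h1
      have : w j * (a * w i0) = w j * (b * w i0) := by ring_nf; ring_nf at h1; linarith
      have h2 := Nat.eq_of_mul_eq_mul_left (hwpos j) this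
      exact Nat.eq_of_mul_eq_mul_right (hwpos i0) h2
    rw [ha, hvi, ← hab]; ring
  have hvpos : ∀ i, 0 < v i := by
    intro i
    have := hpos i i0
    rw [hvw i i0] at this
    exact Nat.pos_of_mul_pos_left (by simpa [mul_comm] using this)
  -- trace
  have htr : w ⬝ᵥ v = n + 2 := by
    have h1 := heq i0 i0
    have h2 : ∑ s, M i0 s * M s i0 = (v i0 * w i0) * ∑ s, w s * v s := by
      rw [Finset.mul_sum]
      apply Finset.sum_congr rfl
      intro s _
      rw [hvw i0 s, hvw s i0]; ring
    rw [h2, ← hvw i0 i0] at h1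
    have := Nat.eq_of_mul_eq_mul_left (hpos i0 i0) (by linarith [h1] : M i0 i0 * ∑ s, w s * v s = M i0 i0 * (n + 2))
    simpa [dotProduct] using this
  have hrle : r ≤ n + 2 := by
    have : ∀ s : Fin r, 1 ≤ w s * v s := fun s => Nat.one_le_iff_ne_zero.2
      (Nat.mul_ne_zero (hwpos s).ne' (hvpos s).ne')
    calc r = ∑ _s : Fin r, 1 := by simp
      _ ≤ ∑ s, w s * v s := Finset.sum_le_sum (fun s _ => this s)
      _ = n + 2 := by simpa [dotProduct] using htr
  refine ⟨hrle, v, w, hvpos, hwpos, ?_, htr⟩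
  ext i j
  simp [Matrix.vecMulVec_apply, hvw i j]
end

section
/- Let M₀, M₁, ..., M_n be nonzero nonnegative integer r×r matrices whose sum M has all entries positive, satisfying M_i M_j = a_j M_i where a₀ = 2 and a_j = 1 for j ≥ 1. Then no M_j has a zero column. -/
/-- Let `M₀, …, Mₙ` be nonzero nonnegative integer `r × r` matrices whose sum `M` has all
entries positive, satisfying `Mᵢ Mⱼ = aⱼ Mᵢ` where `a₀ = 2` and `aⱼ = 1` for `j ≥ 1`.
Then no `Mⱼ` has a zero column. -/
theorem stmt9 {n r : ℕ} (hn : 1 ≤ n) (hr : 1 ≤ r)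
    (Ms : Fin (n + 1) → Matrix (Fin r) (Fin r) ℕ)
    (hnz : ∀ i, Ms i ≠ 0)
    (hpos : ∀ p q, 1 ≤ (∑ i, Ms i) p q)
    (hmul : ∀ i j, Ms i * Ms j = (if j = 0 then 2 else 1 : ℕ) • Ms i) :
    ∀ (j : Fin (n + 1)) (c : Fin r), ∃ p : Fin r, Ms j p c ≠ 0 := by
  intro j c
  by_contra h
  push_neg at h
  have key : (∑ i, Ms i) * Ms j = (if j = 0 then 2 else 1 : ℕ) • (∑ i, Ms i) := by
    rw [Finset.sum_mul, Finset.smul_sum]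
    exact Finset.sum_congr rfl fun i _ => hmul i j
  set p0 : Fin r := ⟨0, hr⟩
  have h1 := congrFun (congrFun key p0) c
  rw [Matrix.mul_apply, Matrix.smul_apply] at h1
  simp only [h, mul_zero, Finset.sum_const_zero] at h1
  have hp := hpos p0 c
  rcases eq_or_ne j 0 with hj | hj <;> simp [hj] at h1 <;> omega
end

section
/- Let M₀, ..., M_n be as in the setup (quasi-idempotent system with M_i M_j = a_j M_i, a_0 = 2, a_j = 1 for j ≥ 1, and Σ M_i positive of size r×r with (Σ M_i)² = (n+2)(Σ M_i)). Then the trace of M₀ is 2 and the trace of each M_i (i ≥ 1) is 1. -/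
/-- A positive natural matrix with `M² = c·M` entrywise has rank-1 structure. -/
lemma rank1_aux {r c : ℕ} (M : Matrix (Fin r) (Fin r) ℕ)
    (hpos : ∀ p q, 1 ≤ M p q)
    (hsq : ∀ p q, ∑ k, M p k * M k q = c * M p q) :
    ∀ p q p' q', M p q * M p' q' = M p' q * M p q' := by
  intro p q p' q'
  set x : Fin r → ℕ := fun i => M i q with hx
  set y : Fin r → ℕ := fun i => M i q' with hy
  -- choose p0 minimizing x p / y p
  obtain ⟨p0, -, hmin⟩ := Finset.exists_min_image Finset.univ
    (fun i => (x i : ℚ) / (y i : ℚ)) ⟨p, Finset.mem_univ p⟩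
  have hmin' : ∀ k, x p0 * y k ≤ x k * y p0 := by
    intro k
    have h := hmin k (Finset.mem_univ k)
    have hyk : (0:ℚ) < (y k : ℚ) := by exact_mod_cast hpos k q'
    have hyp0 : (0:ℚ) < (y p0 : ℚ) := by exact_mod_cast hpos p0 q'
    rw [div_le_div_iff₀ hyp0 hyk] at h
    exact_mod_cast h
  -- the two weighted sums agree
  have hsum : ∑ k, M p0 k * (x p0 * y k) = ∑ k, M p0 k * (x k * y p0) := by
    have h1 : ∑ k, M p0 k * (x p0 * y k) = x p0 * ∑ k, M p0 k * y k := by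
      rw [Finset.mul_sum]; congr 1; funext k; ring
    have h2 : ∑ k, M p0 k * (x k * y p0) = (∑ k, M p0 k * x k) * y p0 := by
      rw [Finset.sum_mul]; congr 1; funext k; ring
    rw [h1, h2, hsq p0 q, hsq p0 q']
    ring
  have hterm : ∀ k, M p0 k * (x p0 * y k) = M p0 k * (x k * y p0) := by
    have := (Finset.sum_eq_sum_iff_of_le
      (fun k _ => Nat.mul_le_mul_left (M p0 k) (hmin' k))).mp hsum
    intro k; exact this k (Finset.mem_univ k)
  have key : ∀ k, x p0 * y k = x k * y p0 := fun k =>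
    Nat.eq_of_mul_eq_mul_left (hpos p0 k) (hterm k)
  -- conclude
  have h1 := key p
  have h2 := key p'
  have hpos0 : 0 < x p0 * y p0 := Nat.mul_pos (hpos p0 q) (hpos p0 q')
  apply Nat.eq_of_mul_eq_mul_right hpos0
  calc x p * y p' * (x p0 * y p0) = (x p * y p0) * (x p0 * y p') := by ring
    _ = (x p0 * y p) * (x p' * y p0) := by rw [← h1, ← h2]
    _ = x p' * y p * (x p0 * y p0) := by ring

/-- In the quasi-idempotent system `M₀, …, Mₙ` with `Mᵢ Mⱼ = aⱼ Mᵢ` (`a₀ = 2`, `aⱼ = 1`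
for `j ≥ 1`), `Σ Mᵢ` positive with `(Σ Mᵢ)² = (n+2)(Σ Mᵢ)`, and the diagonal entries of `M₀`
lying in `{0, 2}`, the trace of `M₀` is `2` and the trace of each `Mᵢ` (`i ≥ 1`) is `1`. -/
theorem stmt10 {n r : ℕ} (hn : 1 ≤ n)
    (Ms : Fin (n + 1) → Matrix (Fin r) (Fin r) ℕ)
    (hnz : ∀ i, Ms i ≠ 0)
    (hpos : ∀ p q, 1 ≤ (∑ i, Ms i) p q)
    (hsq : (∑ i, Ms i) * (∑ i, Ms i) = (n + 2) • (∑ i, Ms i))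
    (hmul : ∀ i j, Ms i * Ms j = (if j = 0 then 2 else 1 : ℕ) • Ms i)
    (hdiag : ∀ p, Ms 0 p p = 0 ∨ Ms 0 p p = 2) :
    Matrix.trace (Ms 0) = 2 ∧ ∀ i : Fin (n + 1), i ≠ 0 → Matrix.trace (Ms i) = 1 := by
  -- r > 0
  rcases Nat.eq_zero_or_pos r with rfl | hr
  · exact absurd (by ext p q; exact p.elim0) (hnz 0)
  set M : Matrix (Fin r) (Fin r) ℕ := ∑ i, Ms i with hM
  have hsq' : ∀ p q, ∑ k, M p k * M k q = (n + 2) * M p q := by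
    intro p q
    have := congrFun (congrFun hsq p) q
    simpa [Matrix.mul_apply, Matrix.smul_apply] using this
  have hrk := rank1_aux M hpos hsq'
  -- trace M = n + 2
  have htr : Matrix.trace M = n + 2 := by
    have h1 : (n + 2) * Matrix.trace M = Matrix.trace M * Matrix.trace M := by
      rw [Matrix.trace]
      unfold Matrix.diag
      rw [Finset.mul_sum, Finset.sum_mul]
      have : ∀ p : Fin r, (n + 2) * M p p = ∑ k, M p k * M k p := fun p => (hsq' p p).symm
      calc ∑ p, (n + 2) * M p p = ∑ p, ∑ k, M p k * M k p := by
            exact Finset.sum_congr rfl fun p _ => this p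
        _ = ∑ p, ∑ k, M p p * M k k := by
            refine Finset.sum_congr rfl fun p _ => Finset.sum_congr rfl fun k _ => ?_
            have := hrk p k k p
            linarith [hrk p k k p]
        _ = ∑ p, M p p * ∑ k, M k k := by
            refine Finset.sum_congr rfl fun p _ => ?_; rw [Finset.mul_sum]
    have hpos' : 0 < Matrix.trace M := by
      rw [Matrix.trace]
      have h0 : 0 < M.diag ⟨0, hr⟩ := hpos _ _
      exact lt_of_lt_of_le h0
        (Finset.single_le_sum (fun i _ => Nat.zero_le _) (Finset.mem_univ _))
    exact (Nat.eq_of_mul_eq_mul_right hpos' (by linarith [h1])).symm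
  -- trace relations
  have htr2 : ∀ i : Fin (n+1), i ≠ 0 → 2 * Matrix.trace (Ms i) = Matrix.trace (Ms 0) := by
    intro i hi
    have h1 : Matrix.trace (Ms i * Ms 0) = 2 * Matrix.trace (Ms i) := by
      rw [hmul i 0, if_pos rfl, Matrix.trace_smul]; rfl
    have h2 : Matrix.trace (Ms 0 * Ms i) = Matrix.trace (Ms 0) := by
      rw [hmul 0 i, if_neg hi, Matrix.trace_smul, one_smul]
    rw [← h1, Matrix.trace_mul_comm, h2]
  -- sum of traces
  have hsumtr : ∑ i, Matrix.trace (Ms i) = n + 2 := by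
    rw [← Matrix.trace_sum]; exact htr
  -- split off i = 0
  have hsplit : Matrix.trace (Ms 0) + ∑ i ∈ Finset.univ.erase 0, Matrix.trace (Ms i) = n + 2 := by
    rw [← hsumtr, ← Finset.add_sum_erase _ _ (Finset.mem_univ 0)]
  have hT : Matrix.trace (Ms 0) = 2 := by
    have h2 : ∑ i ∈ Finset.univ.erase (0 : Fin (n+1)), 2 * Matrix.trace (Ms i)
        = n * Matrix.trace (Ms 0) := by
      rw [Finset.sum_congr rfl fun i hi => htr2 i (Finset.ne_of_mem_erase hi)]
      rw [Finset.sum_const, Finset.card_erase_of_mem (Finset.mem_univ 0)]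
      simp [Fintype.card_fin, smul_eq_mul]
    have h3 : 2 * (n + 2) = (n + 2) * Matrix.trace (Ms 0) := by
      have := congrArg (2 * ·) hsplit
      rw [mul_add, Finset.mul_sum] at this
      rw [Finset.sum_congr rfl (fun i _ => rfl)] at this
      calc 2 * (n + 2) = 2 * Matrix.trace (Ms 0)
            + ∑ i ∈ Finset.univ.erase (0:Fin (n+1)), 2 * Matrix.trace (Ms i) := this.symm
        _ = 2 * Matrix.trace (Ms 0) + n * Matrix.trace (Ms 0) := by rw [h2]
        _ = (n + 2) * Matrix.trace (Ms 0) := by ring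
    have := Nat.eq_of_mul_eq_mul_left (show 0 < n + 2 by omega)
      (by linarith [h3] : (n + 2) * 2 = (n + 2) * Matrix.trace (Ms 0))
    omega
  refine ⟨hT, fun i hi => ?_⟩
  have := htr2 i hi
  omega
end
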